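/- Let h₁ ⊂ h₂ be an über-separated pair of halfspaces in a CAT(0) cube complex, let x be a vertex in h₁ and y a vertex in h₂* (the complement of h₂). Then every combinatorial geodesic from x to y meets the bridge b(ĥ₁, ĥ₂). -/

import Mathlib

/-- A combinatorial model of (the vertex set / 1-skeleton of) a CAT(0) cube complex:
a discrete median space together with its system of hyperplanes (walls). -/
structure CCC where
  /-- vertices -/
  V : Type
  /-- hyperplanes -/
  H : Type
  /-- each hyperplane cuts the vertex set into two halfspaces -/
  side : H → V → Bool
  /-- only finitely many hyperplanes separate two given vertices -/
  finsep : ∀ x y : V, Set.Finite {h : H | side h x ≠ side h y}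
  /-- hyperplanes separate points -/
  eq_of_notsep : ∀ x y : V, (∀ h, side h x = side h y) → x = y
  /-- combinatorial geodesics exist: one can step from `x` towards `y` across a single wall -/
  exists_step : ∀ x y : V, x ≠ y →
    ∃ z : V, {h : H | side h x ≠ side h z}.ncard = 1 ∧
      {h : H | side h z ≠ side h y} ⊆ {h : H | side h x ≠ side h y} ∧
      {h : H | side h z ≠ side h y}.ncard + 1 = {h : H | side h x ≠ side h y}.ncard
  /-- the median operation: on every wall, the median lies on the majority side -/
  median : V → V → V → V
  median_spec : ∀ x y z : V, ∀ h : H,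
    (side h x = side h y → side h (median x y z) = side h x) ∧
    (side h y = side h z → side h (median x y z) = side h y) ∧
    (side h x = side h z → side h (median x y z) = side h x)
  /-- both halfspaces of a hyperplane are nonempty -/
  both_sides : ∀ (h : H) (b : Bool), ∃ v : V, side h v = b

namespace CCC

variable (X : CCC)

/-- the hyperplane `h` separates the vertices `x` and `y` -/
def Separates (h : X.H) (x y : X.V) : Prop := X.side h x ≠ X.side h y

/-- combinatorial distance: the number of separating hyperplanes -/
noncomputable def cdist (x y : X.V) : ℕ := {h : X.H | X.Separates h x y}.ncard

/-- two hyperplanes cross (are transverse): all four sectors are nonempty -/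
def Crosses (h k : X.H) : Prop :=
  ∀ a b : Bool, ∃ v : X.V, X.side h v = a ∧ X.side k v = b

/-- two (distinct, parallel) hyperplanes are strongly separated if no hyperplane is
transverse to both -/
def StronglySeparated (h k : X.H) : Prop :=
  h ≠ k ∧ ¬ X.Crosses h k ∧ ∀ m : X.H, ¬ (X.Crosses m h ∧ X.Crosses m k)

/-- two hyperplanes are über-separated if they are strongly separated and no two
crossing hyperplanes `k₁, k₂` exist with `k₁` crossing the first and `k₂` crossing
the second -/
def UberSeparated (h k : X.H) : Prop :=
  X.StronglySeparated h k ∧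
  ∀ k₁ k₂ : X.H, X.Crosses k₁ h → X.Crosses k₂ k → ¬ X.Crosses k₁ k₂

/-- the halfspace of the hyperplane `h` on the side `b` -/
def hs (h : X.H) (b : Bool) : Set X.V := {v | X.side h v = b}

/-- finite dimensionality: a uniform bound on families of pairwise crossing hyperplanes -/
def FiniteDim : Prop :=
  ∃ n : ℕ, ∀ F : Finset X.H, (∀ h ∈ F, ∀ k ∈ F, h ≠ k → X.Crosses h k) → F.card ≤ n

/-- irreducibility: the complex is not a product of two unbounded cube complexes,
i.e. the hyperplanes do not split into two infinite families with all cross-pairs crossing -/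
def Irreducible : Prop :=
  ¬ ∃ P : X.H → Bool, {h : X.H | P h = true}.Infinite ∧ {h : X.H | P h = false}.Infinite ∧
      ∀ h k : X.H, P h ≠ P k → X.Crosses h k

/-- the interval between two vertices: the union of all combinatorial geodesics -/
def Interval (x y : X.V) : Set X.V := {z | X.cdist x z + X.cdist z y = X.cdist x y}

/-- a combinatorial geodesic of length `n` -/
def IsGeod (γ : ℕ → X.V) (n : ℕ) : Prop :=
  ∀ i j : ℕ, i ≤ j → j ≤ n → X.cdist (γ i) (γ j) = j - i

/-- a combinatorial geodesic ray -/
def IsRay (γ : ℕ → X.V) : Prop :=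
  ∀ i j : ℕ, i ≤ j → X.cdist (γ i) (γ j) = j - i

/-- two rays are asymptotic (bounded Hausdorff distance) -/
def Asymp (γ γ' : ℕ → X.V) : Prop :=
  (∃ C : ℕ, ∀ i : ℕ, ∃ j : ℕ, X.cdist (γ i) (γ' j) ≤ C) ∧
  (∃ C : ℕ, ∀ i : ℕ, ∃ j : ℕ, X.cdist (γ' i) (γ j) ≤ C)

end CCC

namespace CCC

/-- The (combinatorial) bridge between the hyperplanes of the halfspaces `(h₁,b₁)` and
`(h₂,b₂)`: the union of all geodesics between pairs `(x₁,x₂) ∈ h₁ × h₂*` minimizing the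
distance between `h₁` and `h₂*`. -/
def Bridge (X : CCC) (h₁ h₂ : X.H) (b₁ b₂ : Bool) : Set X.V :=
  {z | ∃ x₁ ∈ X.hs h₁ b₁, ∃ x₂ ∈ X.hs h₂ (!b₂),
    (∀ y₁ ∈ X.hs h₁ b₁, ∀ y₂ ∈ X.hs h₂ (!b₂), X.cdist x₁ x₂ ≤ X.cdist y₁ y₂) ∧
    z ∈ X.Interval x₁ x₂}

end CCC

namespace CCC

private lemma bor (a b : Bool) : a = b ∨ a = !b := by cases a <;> cases b <;> simp

private lemma bne {a b : Bool} (h : a ≠ b) : a = !b := by cases a <;> cases b <;> simp_all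

private lemma bnn (b : Bool) : b ≠ !b := by cases b <;> simp

lemma crosses_of (X : CCC) {m h : X.H} {α β : Bool} {v1 v2 v3 v4 : X.V}
    (h11 : X.side m v1 = α) (h12 : X.side h v1 = β)
    (h21 : X.side m v2 = !α) (h22 : X.side h v2 = β)
    (h31 : X.side m v3 = α) (h32 : X.side h v3 = !β)
    (h41 : X.side m v4 = !α) (h42 : X.side h v4 = !β) : X.Crosses m h := by
  intro a b
  rcases bor a α with ha | ha <;> rcases bor b β with hb | hb <;> subst ha <;> subst hb
  · exact ⟨v1, h11, h12⟩
  · exact ⟨v3, h31, h32⟩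
  · exact ⟨v2, h21, h22⟩
  · exact ⟨v4, h41, h42⟩

lemma empty_sector (X : CCC) {m h : X.H} (hnc : ¬ X.Crosses m h) {α β : Bool}
    {v1 v2 v3 : X.V}
    (h11 : X.side m v1 = α) (h12 : X.side h v1 = β)
    (h21 : X.side m v2 = !α) (h22 : X.side h v2 = β)
    (h31 : X.side m v3 = α) (h32 : X.side h v3 = !β) :
    ∀ v, X.side m v = !α → X.side h v = β := by
  unfold Crosses at hnc
  push_neg at hnc
  obtain ⟨a, b, hab⟩ := hnc
  rcases bor a α with ha | ha <;> rcases bor b β with hb | hb <;> subst ha <;> subst hb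
  · exact absurd h12 (hab v1 h11)
  · exact absurd h32 (hab v3 h31)
  · exact absurd h22 (hab v2 h21)
  · intro v hv
    rcases bor (X.side h v) β with h' | h'
    · exact h'
    · exact absurd h' (hab v hv)

lemma interval_iff (X : CCC) (x z y : X.V) :
    X.cdist x z + X.cdist z y = X.cdist x y ↔
    ∀ m, X.side m x = X.side m y → X.side m z = X.side m x := by
  classical
  have fA := X.finsep x z
  have fB := X.finsep z y
  have fC := X.finsep x y
  have hdA : X.cdist x z = {h : X.H | X.side h x ≠ X.side h z}.ncard := rfl
  have hdB : X.cdist z y = {h : X.H | X.side h z ≠ X.side h y}.ncard := rfl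
  have hdC : X.cdist x y = {h : X.H | X.side h x ≠ X.side h y}.ncard := rfl
  set A := {h : X.H | X.side h x ≠ X.side h z} with hA
  set B := {h : X.H | X.side h z ≠ X.side h y} with hB
  set C := {h : X.H | X.side h x ≠ X.side h y} with hC
  have key : A ∪ B = C ∪ A ∩ B := by
    ext m
    have hb : ∀ a b c : Bool, ((a ≠ b ∨ b ≠ c) ↔ (a ≠ c ∨ (a ≠ b ∧ b ≠ c))) := by decide
    simpa [hA, hB, hC, Set.mem_union, Set.mem_inter_iff, Set.mem_setOf_eq] using
      hb (X.side m x) (X.side m z) (X.side m y)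
  have disj : Disjoint C (A ∩ B) := by
    rw [Set.disjoint_left]
    intro m hmC hmAB
    have hb : ∀ a b c : Bool, a ≠ c → a ≠ b → b ≠ c → False := by decide
    exact hb (X.side m x) (X.side m z) (X.side m y) hmC hmAB.1 hmAB.2
  have h1 : (A ∪ B).ncard + (A ∩ B).ncard = A.ncard + B.ncard :=
    Set.ncard_union_add_ncard_inter A B fA fB
  have h2 : (A ∪ B).ncard = C.ncard + (A ∩ B).ncard := by
    rw [key]; exact Set.ncard_union_eq disj fC (fA.inter_of_left _)
  have h3 : A.ncard + B.ncard = C.ncard + 2 * (A ∩ B).ncard := by omega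
  rw [hdA, hdB, hdC]
  constructor
  · intro he m hm
    have h0 : (A ∩ B).ncard = 0 := by omega
    have hAB : A ∩ B = ∅ := (Set.ncard_eq_zero (fA.inter_of_left _)).mp h0
    by_contra hzx
    have : m ∈ A ∩ B := ⟨fun h => hzx h.symm, fun h => hzx (by
      have : X.side m z = X.side m y := h
      rw [this, ← hm])⟩
    rw [hAB] at this; exact this
  · intro hcond
    have hAB : A ∩ B = ∅ := by
      ext m
      simp only [Set.mem_inter_iff, Set.mem_empty_iff_false, iff_false, not_and]
      intro hmA hmB
      have hb : ∀ a b c : Bool, a ≠ b → b ≠ c → a = c := by decide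
      have hxy : X.side m x = X.side m y := hb _ _ _ hmA hmB
      exact hmA (hcond m hxy).symm
    have h0 : (A ∩ B).ncard = 0 := by rw [hAB]; exact Set.ncard_empty _
    omega

end CCC

/-- for an über-separated nested pair of halfspaces `h₁ ⊂ h₂`, every
combinatorial geodesic from a vertex of `h₁` to a vertex of `h₂*` meets the bridge. -/
theorem stmt10 (X : CCC) (h₁ h₂ : X.H) (b₁ b₂ : Bool)
    (hnest : X.hs h₁ b₁ ⊆ X.hs h₂ b₂) (huber : X.UberSeparated h₁ h₂)
    (x y : X.V) (hx : x ∈ X.hs h₁ b₁) (hy : y ∈ X.hs h₂ (!b₂))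
    (γ : ℕ → X.V) (n : ℕ) (hγ : X.IsGeod γ n) (h0 : γ 0 = x) (hn : γ n = y) :
    ∃ i ≤ n, γ i ∈ X.Bridge h₁ h₂ b₁ b₂ := by
  classical
  obtain ⟨⟨hne12, hncross, hss⟩, hub⟩ := huber
  have hx1 : X.side h₁ x = b₁ := hx
  have hy2 : X.side h₂ y = !b₂ := hy
  have hx2 : X.side h₂ x = b₂ := hnest hx
  -- the complement of h₂ is contained in the complement of h₁
  have hsect : ∀ v, X.side h₂ v = !b₂ → X.side h₁ v = !b₁ := by
    intro v hv
    by_contra hcon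
    have hb : X.side h₁ v = b₁ := by
      have := CCC.bne hcon; rwa [Bool.not_not] at this
    have : X.side h₂ v = b₂ := hnest hb
    rw [hv] at this; exact CCC.bnn b₂ this.symm
  have hy1 : X.side h₁ y = !b₁ := hsect y hy2
  -- h₁ and h₂ separate x and y
  have hW1 : X.Separates h₁ x y := by rw [CCC.Separates, hx1, hy1]; exact CCC.bnn b₁
  have hW2 : X.Separates h₂ x y := by rw [CCC.Separates, hx2, hy2]; exact CCC.bnn b₂
  -- the set of walls separating the two halfspaces
  set S : Set X.H := {m | ∃ β, (∀ v, X.side h₁ v = b₁ → X.side m v = β) ∧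
      (∀ v, X.side h₂ v = !b₂ → X.side m v = !β)} with hSdef
  -- a minimizing pair (p, q)
  set D : Set ℕ := {d | ∃ u, X.side h₁ u = b₁ ∧ ∃ v, X.side h₂ v = !b₂ ∧ X.cdist u v = d}
    with hDdef
  have hDne : D.Nonempty := ⟨X.cdist x y, x, hx1, y, hy2, rfl⟩
  obtain ⟨p, hp, q, hq, hpq⟩ := Nat.sInf_mem hDne
  have hmin : ∀ u v, X.side h₁ u = b₁ → X.side h₂ v = !b₂ → X.cdist p q ≤ X.cdist u v := by
    intro u v hu hv
    rw [hpq]; exact Nat.sInf_le ⟨u, hu, v, hv, rfl⟩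
  -- p and q agree on every wall outside S
  have hagree : ∀ m, m ∉ S → X.side m p = X.side m q := by
    intro m hmS
    by_contra hne'
    have hq' : X.side m q = !(X.side m p) := CCC.bne (Ne.symm hne')
    have hnm : ¬ ((∀ v, X.side h₁ v = b₁ → X.side m v = X.side m p) ∧
        (∀ v, X.side h₂ v = !b₂ → X.side m v = !(X.side m p))) :=
      fun hc => hmS ⟨_, hc.1, hc.2⟩
    rw [not_and_or] at hnm
    rcases hnm with hcase | hcase
    · push_neg at hcase
      obtain ⟨w, hw1, hw2⟩ := hcase
      have hw2' : X.side m w = X.side m q := by rw [CCC.bne hw2, hq']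
      set p' := X.median w p q with hp'def
      have hp'1 : X.side h₁ p' = b₁ := by
        have := (X.median_spec w p q h₁).1 (by rw [hw1, hp])
        rw [this, hw1]
      have hsub : {k | X.Separates k p' q} ⊆ {k | X.Separates k p q} := by
        intro k hk
        by_contra hk'
        have hkeq : X.side k p = X.side k q := not_not.mp hk'
        have h' : X.side k p' = X.side k p := (X.median_spec w p q k).2.1 hkeq
        exact hk (h'.trans hkeq)
      have hmem : m ∈ {k | X.Separates k p q} := hne'
      have hnotmem : m ∉ {k | X.Separates k p' q} := by
        have := (X.median_spec w p q m).2.2 hw2'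
        intro hcon
        exact hcon (by rw [this, hw2'])
      have hss' : {k | X.Separates k p' q} ⊂ {k | X.Separates k p q} :=
        ⟨hsub, fun h => hnotmem (h hmem)⟩
      have hlt := Set.ncard_lt_ncard hss' (X.finsep p q)
      have hge := hmin p' q hp'1 hq
      rw [CCC.cdist, CCC.cdist] at hge
      omega
    · push_neg at hcase
      obtain ⟨w, hw1, hw2⟩ := hcase
      have hw2' : X.side m w = X.side m p := by
        rw [CCC.bne hw2, Bool.not_not]
      set q' := X.median w q p with hq'def
      have hq'1 : X.side h₂ q' = !b₂ := by
        have := (X.median_spec w q p h₂).1 (by rw [hw1, hq])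
        rw [this, hw1]
      have hsub : {k | X.Separates k p q'} ⊆ {k | X.Separates k p q} := by
        intro k hk
        by_contra hk'
        have hkeq : X.side k p = X.side k q := not_not.mp hk'
        have h' : X.side k q' = X.side k q := (X.median_spec w q p k).2.1 hkeq.symm
        exact hk (hkeq.trans h'.symm)
      have hmem : m ∈ {k | X.Separates k p q} := hne'
      have hnotmem : m ∉ {k | X.Separates k p q'} := by
        have := (X.median_spec w q p m).2.2 hw2'
        intro hcon
        exact hcon (by rw [this, hw2'])
      have hss' : {k | X.Separates k p q'} ⊂ {k | X.Separates k p q} :=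
        ⟨hsub, fun h => hnotmem (h hmem)⟩
      have hlt := Set.ncard_lt_ncard hss' (X.finsep p q)
      have hge := hmin p q' hp hq'1
      rw [CCC.cdist, CCC.cdist] at hge
      omega
  -- geodesic structure
  have hconv : ∀ i j k, i ≤ j → j ≤ k → k ≤ n →
      ∀ m, X.side m (γ i) = X.side m (γ k) → X.side m (γ j) = X.side m (γ i) := by
    intro i j k hij hjk hkn
    have hadd : X.cdist (γ i) (γ j) + X.cdist (γ j) (γ k) = X.cdist (γ i) (γ k) := by
      rw [hγ i j hij (hjk.trans hkn), hγ j k hjk hkn, hγ i k (hij.trans hjk) hkn]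
      omega
    exact (X.interval_iff _ _ _).mp hadd
  set t : X.H → ℕ := fun m => Nat.findGreatest (fun i => X.side m (γ i) = X.side m x) n
    with htdef
  have tle : ∀ m, t m ≤ n := fun m => Nat.findGreatest_le n
  have tP : ∀ m, X.side m (γ (t m)) = X.side m x := by
    intro m
    have h' := Nat.findGreatest_spec (P := fun i => X.side m (γ i) = X.side m x)
      (Nat.zero_le n) (show X.side m (γ 0) = X.side m x by rw [h0])
    simpa [htdef] using h'
  have tbefore : ∀ m i, i ≤ t m → X.side m (γ i) = X.side m x := by
    intro m i hi
    have := hconv 0 i (t m) (Nat.zero_le i) hi (tle m) m (by rw [h0, tP m])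
    rw [this, h0]
  have tafter : ∀ m i, t m < i → i ≤ n → X.side m (γ i) ≠ X.side m x := by
    intro m i h1 h2
    have h' := Nat.findGreatest_is_greatest (P := fun i => X.side m (γ i) = X.side m x)
      (n := n) (k := i) (by simpa [htdef] using h1) h2
    simpa using h'
  have tafter' : ∀ m, X.Separates m x y → ∀ i, t m < i → i ≤ n →
      X.side m (γ i) = !(X.side m x) := by
    intro m hm i h1 h2
    exact CCC.bne (tafter m i h1 h2)
  have tlt : ∀ m, X.Separates m x y → t m < n := by
    intro m hm
    rcases Nat.lt_or_ge (t m) n with h | h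
    · exact h
    · have h' : t m = n := le_antisymm (tle m) h
      have := tP m
      rw [h', hn] at this
      exact absurd this.symm hm
  have hconst : ∀ m, ¬ X.Separates m x y → ∀ i, i ≤ n → X.side m (γ i) = X.side m x := by
    intro m hm i hi
    have hxy : X.side m x = X.side m y := not_not.mp hm
    have := hconv 0 i n (Nat.zero_le i) hi le_rfl m (by rw [h0, hn]; exact hxy)
    rw [this, h0]
  -- type classification for walls not in S
  set TX : X.H → Prop := fun m => ∀ v, X.side h₁ v = b₁ → X.side m v = X.side m x
    with hTXdef
  set TY : X.H → Prop := fun m => ∀ v, X.side h₂ v = !b₂ → X.side m v = X.side m y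
    with hTYdef
  have hXorY : ∀ m, X.Separates m x y → m ∉ S → TX m ∨ TY m := by
    intro m hmW hmS
    by_contra hcon
    push_neg at hcon
    obtain ⟨hnX, hnY⟩ := hcon
    simp only [hTXdef] at hnX
    simp only [hTYdef] at hnY
    push_neg at hnX hnY
    obtain ⟨u, hu1, hu2⟩ := hnX
    obtain ⟨v, hv1, hv2⟩ := hnY
    have hyx : X.side m y = !(X.side m x) := CCC.bne (Ne.symm hmW)
    have hu2' : X.side m u = !(X.side m x) := CCC.bne hu2
    have hv2' : X.side m v = X.side m x := by
      rw [CCC.bne hv2, hyx, Bool.not_not]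
    refine hss m ⟨?_, ?_⟩
    · exact X.crosses_of rfl hx1 hu2' hu1 hv2' (hsect v hv1) hyx hy1
    · exact X.crosses_of rfl hx2 hu2' (hnest hu1) hv2' hv1 hyx hy2
  have hXY_S : ∀ m, X.Separates m x y → TX m → TY m → m ∈ S := by
    intro m hmW hX hY
    exact ⟨X.side m x, hX, fun v hv => by
      rw [hY v hv]; exact CCC.bne (Ne.symm hmW)⟩
  -- ordering: every Type Y wall is crossed before every Type X wall
  have horder : ∀ m m', X.Separates m x y → m ∉ S → TY m →
      X.Separates m' x y → m' ∉ S → TX m' → t m < t m' := by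
    intro m m' hmW hmS hmY hm'W hm'S hm'X
    by_contra hcon
    push_neg at hcon
    have hmm' : m ≠ m' := by
      intro he
      subst he
      exact hmS (hXY_S m hmW hm'X hmY)
    have hlt : t m' < t m := by
      rcases Nat.lt_or_ge (t m') (t m) with h | h
      · exact h
      · exfalso
        have heq : t m = t m' := le_antisymm h hcon
        have hsn : t m + 1 ≤ n := tlt m hmW
        have hfm : X.side m (γ (t m)) ≠ X.side m (γ (t m + 1)) := by
          rw [tP m]
          exact fun h' => tafter m (t m + 1) (Nat.lt_succ_self _) hsn h'.symm
        have hfm' : X.side m' (γ (t m)) ≠ X.side m' (γ (t m + 1)) := by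
          rw [heq, tP m']
          exact fun h' => tafter m' (t m' + 1) (Nat.lt_succ_self _) (heq ▸ hsn) h'.symm
        have hcd : X.cdist (γ (t m)) (γ (t m + 1)) = 1 := by
          rw [hγ (t m) (t m + 1) (Nat.le_succ _) hsn]; omega
        have hsub : ({m, m'} : Set X.H) ⊆ {k | X.Separates k (γ (t m)) (γ (t m + 1))} := by
          intro k hk
          rcases hk with hk | hk
          · subst hk; exact hfm
          · simp only [Set.mem_singleton_iff] at hk; subst hk; exact hfm'
        have h2 : ({m, m'} : Set X.H).ncard = 2 := Set.ncard_pair hmm'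
        have := Set.ncard_le_ncard hsub (X.finsep _ _)
        rw [h2] at this
        rw [CCC.cdist] at hcd
        omega
    have hu1 : X.side m (γ (t m' + 1)) = X.side m x := tbefore m _ (Nat.succ_le_of_lt hlt)
    have hu2 : X.side m' (γ (t m' + 1)) = !(X.side m' x) :=
      tafter' m' hm'W _ (Nat.lt_succ_self _) ((Nat.succ_le_of_lt hlt).trans (tle m))
    by_cases hc1 : X.Crosses m h₁
    · by_cases hc2 : X.Crosses m' h₂
      · -- über-separation kills this case
        have hnc := hub m m' hc1 hc2
        have hyx : X.side m y = !(X.side m x) := CCC.bne (Ne.symm hmW)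
        have hy'x : X.side m' y = !(X.side m' x) := CCC.bne (Ne.symm hm'W)
        have hemp := X.empty_sector hnc (α := X.side m x) (β := !(X.side m' x))
          hu1 hu2 hyx hy'x rfl (by rw [Bool.not_not])
        obtain ⟨w, hw1, hw2⟩ := hc1 (!(X.side m x)) b₁
        have := hm'X w hw2
        rw [hemp w hw1] at this
        exact CCC.bnn _ this.symm
      · -- m' does not cross h₂ : its far side is inside h₂*
        have hnY' : ¬ TY m' := fun hY => hm'S (hXY_S m' hm'W hm'X hY)
        simp only [hTYdef] at hnY'
        push_neg at hnY'
        obtain ⟨v, hvb, hvm⟩ := hnY'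
        have hy'x : X.side m' y = !(X.side m' x) := CCC.bne (Ne.symm hm'W)
        have hvm' : X.side m' v = X.side m' x := by
          rw [CCC.bne hvm, hy'x, Bool.not_not]
        have hemp := X.empty_sector hc2 (α := X.side m' x) (β := !b₂)
          hvm' hvb hy'x hy2 rfl (by rw [Bool.not_not]; exact hx2)
        have h2u : X.side h₂ (γ (t m' + 1)) = !b₂ := hemp _ hu2
        have hcle : t h₂ < t m' + 1 := by
          by_contra hle
          push_neg at hle
          have := tbefore h₂ _ hle
          rw [hx2] at this
          rw [this] at h2u
          exact CCC.bnn b₂ h2u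
        have hcm : t h₂ < t m := by omega
        have h2tm : X.side h₂ (γ (t m)) = !b₂ := by
          have := tafter' h₂ hW2 _ hcm (tle m)
          rw [hx2] at this; exact this
        have hmy := hmY _ h2tm
        rw [tP m, CCC.bne (Ne.symm hmW)] at hmy
        exact CCC.bnn _ hmy
    · -- m does not cross h₁ : its near side is inside h₁
      have hnX' : ¬ TX m := fun hX => hmS (hXY_S m hmW hX hmY)
      simp only [hTXdef] at hnX'
      push_neg at hnX'
      obtain ⟨u0, hub₁, hum⟩ := hnX'
      have hyx : X.side m y = !(X.side m x) := CCC.bne (Ne.symm hmW)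
      have hemp := X.empty_sector hc1 (α := !(X.side m x)) (β := b₁)
        (CCC.bne hum) hub₁ (by rw [Bool.not_not]) hx1 hyx hy1
      simp only [Bool.not_not] at hemp
      have h1tm : X.side h₁ (γ (t m)) = b₁ := hemp _ (tP m)
      have htm_le : t m ≤ t h₁ := by
        by_contra h'
        push_neg at h'
        have := tafter' h₁ hW1 _ h' (tle m)
        rw [hx1] at this
        rw [this] at h1tm
        exact CCC.bnn b₁ h1tm.symm
      have hu1' : X.side h₁ (γ (t m' + 1)) = b₁ := by
        have := tbefore h₁ _ ((Nat.succ_le_of_lt hlt).trans htm_le)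
        rw [hx1] at this; exact this
      have := hm'X _ hu1'
      rw [hu2] at this
      exact CCC.bnn _ this.symm
  -- choose the time i
  have hTYfin : ({m | X.Separates m x y ∧ m ∉ S ∧ TY m} : Set X.H).Finite :=
    (X.finsep x y).subset (fun m hm => hm.1)
  obtain ⟨i, hin, hKY, hKX⟩ :
      ∃ i, i ≤ n ∧ (∀ m, X.Separates m x y → m ∉ S → TY m → t m < i) ∧
        (∀ m', X.Separates m' x y → m' ∉ S → TX m' → i ≤ t m') := by
    rcases ({m | X.Separates m x y ∧ m ∉ S ∧ TY m} : Set X.H).eq_empty_or_nonempty with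
      hE | hNE
    · refine ⟨0, Nat.zero_le n, ?_, fun _ _ _ _ => Nat.zero_le _⟩
      intro m hm1 hm2 hm3
      have hmem : m ∈ ({m | X.Separates m x y ∧ m ∉ S ∧ TY m} : Set X.H) := ⟨hm1, hm2, hm3⟩
      rw [hE] at hmem
      exact absurd hmem (Set.notMem_empty m)
    · obtain ⟨m₀, hm₀, hmax⟩ := Set.Finite.exists_maximalFor t _ hTYfin hNE
      refine ⟨t m₀ + 1, tlt m₀ hm₀.1, ?_, ?_⟩
      · intro m h1 h2 h3
        have hm : m ∈ ({m | X.Separates m x y ∧ m ∉ S ∧ TY m} : Set X.H) := ⟨h1, h2, h3⟩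
        rcases Nat.lt_or_ge (t m) (t m₀ + 1) with h | h
        · exact h
        · have := hmax (j := m) hm (by omega)
          omega
      · intro m' h1 h2 h3
        exact Nat.succ_le_of_lt (horder m₀ m' hm₀.1 hm₀.2.1 hm₀.2.2 h1 h2 h3)
  -- final assembly
  refine ⟨i, hin, p, hp, q, hq, fun y₁ hy₁ y₂ hy₂ => hmin y₁ y₂ hy₁ hy₂, ?_⟩
  show X.cdist p (γ i) + X.cdist (γ i) q = X.cdist p q
  refine (X.interval_iff p (γ i) q).mpr ?_
  intro m hm
  by_cases hmS : m ∈ S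
  · exfalso
    obtain ⟨β, hβ1, hβ2⟩ := hmS
    have := (hβ1 p hp).symm.trans (hm.trans (hβ2 q hq))
    exact CCC.bnn β this
  by_cases hmW : X.Separates m x y
  · rcases hXorY m hmW hmS with hX | hY
    · rw [tbefore m i (hKX m hmW hmS hX), ← hX p hp]
    · have h1 : X.side m (γ i) = !(X.side m x) := tafter' m hmW i (hKY m hmW hmS hY) hin
      rw [h1, hm, hY q hq, CCC.bne (Ne.symm hmW)]
  · have h1 : X.side m (γ i) = X.side m x := hconst m hmW i hin
    rw [h1]
    by_contra hne2
    have hp' : X.side m p = !(X.side m x) := CCC.bne (fun h => hne2 h.symm)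
    have hq' : X.side m q = !(X.side m x) := by rw [← hm, hp']
    have hyx : X.side m y = X.side m x := (not_not.mp hmW).symm
    refine hss m ⟨?_, ?_⟩
    · exact X.crosses_of rfl hx1 hp' hp hyx hy1 hq' (hsect q hq)
    · exact X.crosses_of rfl hx2 hp' (hnest hp) hyx hy2 hq' hq
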